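/- Let g(x,y,ρ) = 2∫ sgn(x-u)·φ(u)·(Φ((y-ρu)/√(1-ρ²)) - Φ(y)) du, where φ and Φ are the standard normal density and CDF and -1 < ρ < 1. Then |g(x,y,ρ)| ≤ (2/π + 1)·|ρ| for all x, y. -/

import Mathlib

open MeasureTheory Real Set Filter

noncomputable def stdphi (x : ℝ) : ℝ := Real.exp (-x ^ 2 / 2) / Real.sqrt (2 * Real.pi)

noncomputable def stdPhi (x : ℝ) : ℝ := ∫ t in Set.Iic x, stdphi t

lemma sqrt2pi_pos : 0 < Real.sqrt (2 * Real.pi) := Real.sqrt_pos.2 (by positivity)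

lemma stdphi_pos (x : ℝ) : 0 < stdphi x := div_pos (Real.exp_pos _) sqrt2pi_pos

lemma stdphi_le (x : ℝ) : stdphi x ≤ 1 / Real.sqrt (2 * Real.pi) := by
  unfold stdphi
  gcongr
  exact Real.exp_le_one_iff.2 (by nlinarith [sq_nonneg x])

lemma stdphi_anti {a b : ℝ} (h : a ^ 2 ≤ b ^ 2) : stdphi b ≤ stdphi a := by
  unfold stdphi
  gcongr rexp ?_ / _
  linarith

lemma integrable_exp_half : Integrable (fun x : ℝ => Real.exp (-(1/2 : ℝ) * x ^ 2)) :=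
  integrable_exp_neg_mul_sq (by norm_num)

lemma stdphi_eq (x : ℝ) : stdphi x = Real.exp (-(1/2 : ℝ) * x ^ 2) / Real.sqrt (2 * Real.pi) := by
  unfold stdphi; ring_nf

lemma integrable_stdphi : Integrable stdphi := by
  have h := integrable_exp_half.div_const (Real.sqrt (2 * Real.pi))
  refine h.congr (Filter.Eventually.of_forall fun x => ?_)
  rw [stdphi_eq]

lemma integral_stdphi : ∫ x, stdphi x = 1 := by
  have h : ∫ x, stdphi x = (∫ x : ℝ, Real.exp (-(1/2 : ℝ) * x ^ 2)) / Real.sqrt (2 * Real.pi) := by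
    rw [← integral_div]
    exact integral_congr_ae (Filter.Eventually.of_forall fun x => stdphi_eq x)
  rw [h, integral_gaussian]
  rw [show Real.pi / (1/2 : ℝ) = 2 * Real.pi by ring]
  exact div_self (ne_of_gt sqrt2pi_pos)

lemma stdPhi_sub (a b : ℝ) : stdPhi b - stdPhi a = ∫ t in a..b, stdphi t :=
  intervalIntegral.integral_Iic_sub_Iic integrable_stdphi.integrableOn integrable_stdphi.integrableOn

lemma stdPhi_mono : Monotone stdPhi := by
  intro a b hab
  have h := stdPhi_sub a b
  have h2 : 0 ≤ ∫ t in a..b, stdphi t :=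
    intervalIntegral.integral_nonneg hab (fun t _ => (stdphi_pos t).le)
  linarith

lemma stdPhi_nonneg (x : ℝ) : 0 ≤ stdPhi x :=
  setIntegral_nonneg measurableSet_Iic (fun t _ => (stdphi_pos t).le)

lemma stdPhi_le_one (x : ℝ) : stdPhi x ≤ 1 := by
  rw [← integral_stdphi]
  exact setIntegral_le_integral integrable_stdphi
    (Filter.Eventually.of_forall fun t => (stdphi_pos t).le)

lemma one_sub_stdPhi (x : ℝ) : 1 - stdPhi x = ∫ t in Set.Ioi x, stdphi t := by
  have h := intervalIntegral.integral_Iic_add_Ioi (b := x) (f := stdphi) (μ := volume)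
    integrable_stdphi.integrableOn integrable_stdphi.integrableOn
  rw [← integral_stdphi]
  unfold stdPhi
  linarith

lemma stdPhi_lip (a b : ℝ) :
    |stdPhi a - stdPhi b| ≤ |a - b| / Real.sqrt (2 * Real.pi) := by
  rw [stdPhi_sub]
  have h := intervalIntegral.norm_integral_le_of_norm_le_const
    (C := 1 / Real.sqrt (2 * Real.pi)) (f := stdphi) (a := b) (b := a)
    (fun t _ => by rw [Real.norm_eq_abs, abs_of_pos (stdphi_pos t)]; exact stdphi_le t)
  rw [Real.norm_eq_abs] at h
  calc |∫ t in b..a, stdphi t| ≤ 1 / Real.sqrt (2 * Real.pi) * |a - b| := h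
    _ = |a - b| / Real.sqrt (2 * Real.pi) := by ring

lemma stdPhi_zero : stdPhi 0 = 1 / 2 := by
  have h1 : 1 - stdPhi 0 = ∫ t in Set.Ioi (0:ℝ), stdphi t := one_sub_stdPhi 0
  have h2 : ∫ t in Set.Ioi (0:ℝ), stdphi t = 1 / 2 := by
    have h3 : ∫ t in Set.Ioi (0:ℝ), stdphi t
        = (∫ t in Set.Ioi (0:ℝ), Real.exp (-(1/2:ℝ) * t ^ 2)) / Real.sqrt (2 * Real.pi) := by
      rw [← integral_div]
      exact setIntegral_congr_fun measurableSet_Ioi (fun t _ => stdphi_eq t)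
    rw [h3, integral_gaussian_Ioi, show Real.pi / (1/2 : ℝ) = 2 * Real.pi by ring]
    rw [div_div, div_eq_div_iff (by positivity) (by norm_num)]
    ring
  linarith

lemma integral_Ioi_shift (w : ℝ) :
    ∫ t in Set.Ioi w, stdphi (t - w) = ∫ t in Set.Ioi (0:ℝ), stdphi t := by
  have A : MeasurableEmbedding (fun x : ℝ => x + w) :=
    (Homeomorph.addRight w).isClosedEmbedding.measurableEmbedding
  have hmap : Measure.map (fun x : ℝ => x + w) volume = volume :=
    map_add_right_eq_self volume w
  have := A.setIntegral_map (μ := volume) (g := fun t => stdphi (t - w)) (s := Set.Ioi w)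
  rw [hmap] at this
  rw [this]
  have hpre : (fun x : ℝ => x + w) ⁻¹' Set.Ioi w = Set.Ioi 0 := by
    ext t; simp [Set.mem_Ioi]
  rw [hpre]
  exact setIntegral_congr_fun measurableSet_Ioi (fun t _ => by simp)

lemma integral_Iic_shift (w : ℝ) :
    ∫ t in Set.Iic w, stdphi (t - w) = ∫ t in Set.Iic (0:ℝ), stdphi t := by
  have A : MeasurableEmbedding (fun x : ℝ => x + w) :=
    (Homeomorph.addRight w).isClosedEmbedding.measurableEmbedding
  have hmap : Measure.map (fun x : ℝ => x + w) volume = volume :=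
    map_add_right_eq_self volume w
  have := A.setIntegral_map (μ := volume) (g := fun t => stdphi (t - w)) (s := Set.Iic w)
  rw [hmap] at this
  rw [this]
  have hpre : (fun x : ℝ => x + w) ⁻¹' Set.Iic w = Set.Iic 0 := by
    ext t; simp [Set.mem_Iic]
  rw [hpre]
  exact setIntegral_congr_fun measurableSet_Iic (fun t _ => by simp)

lemma stdphi_shift_bound {w t : ℝ} (h : 0 ≤ w * (t - w)) :
    stdphi t ≤ Real.exp (-w ^ 2 / 2) * stdphi (t - w) := by
  have h2 : Real.exp (-t ^ 2 / 2) ≤ Real.exp (-w ^ 2 / 2) * Real.exp (-(t - w) ^ 2 / 2) := by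
    rw [← Real.exp_add]; exact Real.exp_le_exp.2 (by nlinarith)
  unfold stdphi
  rw [← mul_div_assoc]
  exact (div_le_div_iff_of_pos_right sqrt2pi_pos).2 h2

lemma integrable_shift (w : ℝ) : Integrable (fun t => stdphi (t - w)) := by
  have := integrable_stdphi.comp_sub_right w
  exact this

lemma tail_right {w : ℝ} (hw : 0 ≤ w) :
    ∫ t in Set.Ioi w, stdphi t ≤ Real.exp (-w ^ 2 / 2) / 2 := by
  have hb : ∫ t in Set.Ioi w, stdphi t
      ≤ ∫ t in Set.Ioi w, Real.exp (-w ^ 2 / 2) * stdphi (t - w) := by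
    refine setIntegral_mono_on integrable_stdphi.integrableOn
      (((integrable_shift w).const_mul _).integrableOn) measurableSet_Ioi (fun t ht => ?_)
    exact stdphi_shift_bound (mul_nonneg hw (by linarith [ht.out]))
  calc ∫ t in Set.Ioi w, stdphi t
      ≤ ∫ t in Set.Ioi w, Real.exp (-w ^ 2 / 2) * stdphi (t - w) := hb
    _ = Real.exp (-w ^ 2 / 2) * ∫ t in Set.Ioi w, stdphi (t - w) := integral_const_mul _ _
    _ = Real.exp (-w ^ 2 / 2) * (1 / 2) := by
        rw [integral_Ioi_shift]
        congr 1
        have := one_sub_stdPhi (0:ℝ)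
        rw [stdPhi_zero] at this
        linarith
    _ = Real.exp (-w ^ 2 / 2) / 2 := by ring

lemma tail_left {w : ℝ} (hw : w ≤ 0) : stdPhi w ≤ Real.exp (-w ^ 2 / 2) / 2 := by
  have hb : ∫ t in Set.Iic w, stdphi t
      ≤ ∫ t in Set.Iic w, Real.exp (-w ^ 2 / 2) * stdphi (t - w) := by
    refine setIntegral_mono_on integrable_stdphi.integrableOn
      (((integrable_shift w).const_mul _).integrableOn) measurableSet_Iic (fun t ht => ?_)
    exact stdphi_shift_bound (by nlinarith [mul_nonneg (neg_nonneg.2 hw) (sub_nonneg.2 ht.out)])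
  calc stdPhi w
      ≤ ∫ t in Set.Iic w, Real.exp (-w ^ 2 / 2) * stdphi (t - w) := hb
    _ = Real.exp (-w ^ 2 / 2) * ∫ t in Set.Iic w, stdphi (t - w) := integral_const_mul _ _
    _ = Real.exp (-w ^ 2 / 2) * (1 / 2) := by
        rw [integral_Iic_shift]
        have := stdPhi_zero
        unfold stdPhi at this
        rw [this]
    _ = Real.exp (-w ^ 2 / 2) / 2 := by ring

lemma diff_le_lin {l : ℝ} (hl : 1 ≤ l) (w : ℝ) :
    |stdPhi (l * w) - stdPhi w| ≤ (l - 1) * (|w| * stdphi w) := by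
  rw [stdPhi_sub]
  have hsub : ∀ t ∈ Set.uIoc w (l * w), ‖stdphi t‖ ≤ stdphi w := by
    intro t ht
    rw [Real.norm_eq_abs, abs_of_pos (stdphi_pos t)]
    refine stdphi_anti ?_
    rcases le_or_gt 0 w with hw | hw
    · have h1 : w ≤ l * w := le_mul_of_one_le_left hw hl
      rw [Set.uIoc_of_le h1] at ht
      nlinarith [ht.1, ht.2, hw]
    · have h1 : l * w ≤ w := by nlinarith
      rw [Set.uIoc_of_ge h1] at ht
      nlinarith [ht.1, ht.2, hw]
  have h := intervalIntegral.norm_integral_le_of_norm_le_const hsub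
  rw [Real.norm_eq_abs] at h
  calc |∫ t in w..l * w, stdphi t| ≤ stdphi w * |l * w - w| := h
    _ = (l - 1) * (|w| * stdphi w) := by
        rw [show l * w - w = (l - 1) * w by ring, abs_mul, abs_of_nonneg (by linarith : (0:ℝ) ≤ l - 1)]
        ring

lemma diff_le_tail {l : ℝ} (hl : 1 ≤ l) (w : ℝ) :
    |stdPhi (l * w) - stdPhi w| ≤ Real.exp (-w ^ 2 / 2) / 2 := by
  rcases le_or_gt 0 w with hw | hw
  · have h1 : w ≤ l * w := le_mul_of_one_le_left hw hl
    have h2 : stdPhi w ≤ stdPhi (l * w) := stdPhi_mono h1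
    rw [abs_of_nonneg (by linarith)]
    have h3 : stdPhi (l * w) ≤ 1 := stdPhi_le_one _
    have h4 := tail_right hw
    rw [← one_sub_stdPhi] at h4
    linarith
  · have h1 : l * w ≤ w := by nlinarith
    have h2 : stdPhi (l * w) ≤ stdPhi w := stdPhi_mono h1
    rw [abs_of_nonpos (by linarith)]
    have h3 : 0 ≤ stdPhi (l * w) := stdPhi_nonneg _
    have h4 := tail_left hw.le
    linarith

set_option maxHeartbeats 1000000 in
lemma lemA {r : ℝ} (hr0 : 0 ≤ r) (hr1 : r < 1) (w : ℝ) :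
    |stdPhi (w / Real.sqrt (1 - r ^ 2)) - stdPhi w| ≤ r / 2 := by
  set σ := Real.sqrt (1 - r ^ 2) with hσdef
  have hσsq : σ ^ 2 = 1 - r ^ 2 := Real.sq_sqrt (by nlinarith)
  have hσpos : 0 < σ := Real.sqrt_pos.2 (by nlinarith)
  clear_value σ
  have hσle : σ ≤ 1 := by nlinarith [hσsq]
  set l := 1 / σ with hldef
  have hl : 1 ≤ l := by rw [hldef, le_div_iff₀ hσpos]; linarith
  clear_value l
  have heq : w / σ = l * w := by rw [hldef]; field_simp
  rw [heq]
  have hlin := diff_le_lin hl w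
  have htail := diff_le_tail hl w
  have hlσ : l * σ = 1 := by rw [hldef]; field_simp
  have hl1 : l - 1 ≤ r ^ 2 * l := by nlinarith [hσpos]
  by_cases hcase : |w| * stdphi w * (r * l) ≤ 1 / 2
  · calc |stdPhi (l * w) - stdPhi w| ≤ (l - 1) * (|w| * stdphi w) := hlin
      _ ≤ r ^ 2 * l * (|w| * stdphi w) := by
          have hn : 0 ≤ |w| * stdphi w := mul_nonneg (abs_nonneg w) (stdphi_pos w).le
          exact mul_le_mul_of_nonneg_right hl1 hn
      _ = r * (|w| * stdphi w * (r * l)) := by ring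
      _ ≤ r * (1 / 2) := mul_le_mul_of_nonneg_left hcase hr0
      _ = r / 2 := by ring
  · push_neg at hcase
    set E := Real.exp (-w ^ 2 / 2) with hEdef
    have hEpos : 0 < E := Real.exp_pos _
    have hEsq : E ^ 2 = Real.exp (-w ^ 2) := by
      rw [hEdef, sq, ← Real.exp_add]; ring_nf
    clear_value E
    have hE1 : E ^ 2 ≤ 1 := by
      rw [hEsq]; exact Real.exp_le_one_iff.2 (by nlinarith [sq_nonneg w])
    have hsE : w ^ 2 * E ^ 2 ≤ 1 - E ^ 2 := by
      have h1 : w ^ 2 + 1 ≤ Real.exp (w ^ 2) := Real.add_one_le_exp _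
      have h2 : Real.exp (w ^ 2) * E ^ 2 = 1 := by
        rw [hEsq, ← Real.exp_add]; simp
      nlinarith [hEpos, sq_nonneg w]
    have hphiw : stdphi w = E / Real.sqrt (2 * Real.pi) := by rw [hEdef]; rfl
    have h2pi : (Real.sqrt (2 * Real.pi)) ^ 2 = 2 * Real.pi := Real.sq_sqrt (by positivity)
    have hsq2pi := sqrt2pi_pos
    have hkey2 : |w| * stdphi w * (r * l) = |w| * E * r / (Real.sqrt (2 * Real.pi) * σ) := by
      rw [hphiw, hldef]; field_simp
    rw [hkey2, lt_div_iff₀ (by positivity)] at hcase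
    have h3 : Real.sqrt (2 * Real.pi) * σ < 2 * (|w| * E * r) := by linarith
    have h4 : 2 * Real.pi * σ ^ 2 < 4 * (|w| * E * r) ^ 2 := by
      have hle : 0 ≤ Real.sqrt (2 * Real.pi) * σ := by positivity
      nlinarith [mul_self_lt_mul_self hle h3, h2pi]
    have h5 : 2 * Real.pi * (1 - r ^ 2) < 4 * (w ^ 2 * E ^ 2 * r ^ 2) := by
      rw [hσsq] at h4
      calc 2 * Real.pi * (1 - r ^ 2) < 4 * (|w| * E * r) ^ 2 := h4
        _ = 4 * (w ^ 2 * E ^ 2 * r ^ 2) := by rw [mul_pow, mul_pow, sq_abs]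
    have hpi : 3 < Real.pi := Real.pi_gt_three
    have hEr : E ^ 2 ≤ r ^ 2 := by
      have t1 : 4 * E ^ 2 * (w ^ 2 * E ^ 2) ≤ 4 * E ^ 2 * (1 - E ^ 2) :=
        mul_le_mul_of_nonneg_left hsE (by positivity)
      have t2 : 4 * E ^ 2 * (1 - E ^ 2) ≤ 4 * (1 - E ^ 2) := by
        linarith [sq_nonneg (1 - E ^ 2)]
      have hkey : E ^ 2 * (2 * Real.pi + 4 * (w ^ 2 * E ^ 2)) ≤ 2 * Real.pi := by
        have hq : (0:ℝ) ≤ (2 * Real.pi - 4) * (1 - E ^ 2) :=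
          mul_nonneg (by linarith) (by linarith)
        nlinarith [t1, t2, hq]
      have hr2 : 2 * Real.pi < r ^ 2 * (2 * Real.pi + 4 * (w ^ 2 * E ^ 2)) := by
        nlinarith [h5]
      have hposd : 0 < 2 * Real.pi + 4 * (w ^ 2 * E ^ 2) := by positivity
      by_contra hcon
      push_neg at hcon
      have hstep : r ^ 2 * (2 * Real.pi + 4 * (w ^ 2 * E ^ 2))
          ≤ E ^ 2 * (2 * Real.pi + 4 * (w ^ 2 * E ^ 2)) :=
        mul_le_mul_of_nonneg_right hcon.le hposd.le
      linarith
    have hEr2 : E ≤ r := by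
      by_contra hcon
      push_neg at hcon
      have := mul_self_lt_mul_self hr0 hcon
      nlinarith
    calc |stdPhi (l * w) - stdPhi w| ≤ E / 2 := htail
      _ ≤ r / 2 := by linarith

lemma continuous_stdphi : Continuous stdphi := by
  unfold stdphi
  fun_prop

lemma continuous_stdPhi : Continuous stdPhi := by
  have h := integrable_stdphi.continuous_primitive 0
  have heq : stdPhi = fun b => stdPhi 0 + ∫ x in (0:ℝ)..b, stdphi x := by
    funext b
    rw [← stdPhi_sub]
    ring
  rw [heq]
  exact continuous_const.add h

lemma measurable_realSign : Measurable Real.sign := by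
  unfold Real.sign
  exact Measurable.ite measurableSet_Iio measurable_const
    (Measurable.ite measurableSet_Ioi measurable_const measurable_const)

lemma abs_realSign (t : ℝ) : |Real.sign t| ≤ 1 := by
  rcases Real.sign_apply_eq t with h | h | h <;> rw [h] <;> norm_num

lemma integral_abs_stdphi : ∫ u, |u| * stdphi u = 2 / Real.sqrt (2 * Real.pi) := by
  have heq : (fun u : ℝ => |u| * stdphi u) = fun u => |u| * stdphi |u| := by
    funext u
    congr 1
    exact stdphi_anti (by rw [sq_abs]) |>.antisymm (stdphi_anti (by rw [sq_abs]))
  rw [heq, integral_comp_abs (f := fun t => t * stdphi t)]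
  have h1 : ∫ t in Set.Ioi (0:ℝ), t * stdphi t
      = (∫ t in Set.Ioi (0:ℝ), t * Real.exp (-(1/2:ℝ) * t ^ 2)) / Real.sqrt (2 * Real.pi) := by
    rw [← integral_div]
    refine setIntegral_congr_fun measurableSet_Ioi (fun t _ => ?_)
    rw [stdphi_eq]
    ring
  have h2 : ∫ t in Set.Ioi (0:ℝ), t * Real.exp (-(1/2:ℝ) * t ^ 2) = 1 := by
    have hderiv : ∀ t ∈ Set.Ici (0:ℝ),
        HasDerivAt (fun s : ℝ => -Real.exp (-(1/2:ℝ) * s ^ 2))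
          (t * Real.exp (-(1/2:ℝ) * t ^ 2)) t := by
      intro t _
      have h := ((hasDerivAt_pow 2 t).const_mul (-(1/2:ℝ))).exp.neg
      have h' : HasDerivAt (fun s : ℝ => -Real.exp (-(1/2:ℝ) * s ^ 2))
          (-(Real.exp (-(1/2:ℝ) * t ^ 2) * (-(1/2:ℝ) * (((2:ℕ):ℝ) * t ^ (2 - 1))))) t := h
      convert h' using 1
      simp
      ring
    have hint : IntegrableOn (fun t : ℝ => t * Real.exp (-(1/2:ℝ) * t ^ 2)) (Set.Ioi 0) :=
      (integrable_mul_exp_neg_mul_sq (by norm_num : (0:ℝ) < 1/2)).integrableOn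
    have htend : Tendsto (fun s : ℝ => -Real.exp (-(1/2:ℝ) * s ^ 2)) atTop (nhds 0) := by
      rw [show (0:ℝ) = -0 by norm_num]
      refine Tendsto.neg ?_
      refine Real.tendsto_exp_atBot.comp ?_
      have h2 : Tendsto (fun s : ℝ => s ^ 2) atTop atTop := tendsto_pow_atTop (by norm_num)
      exact Tendsto.const_mul_atTop_of_neg (by norm_num) h2
    have := integral_Ioi_of_hasDerivAt_of_tendsto' hderiv hint htend
    rw [this]
    norm_num
  rw [h1, h2]
  ring

lemma integrable_abs_stdphi : Integrable (fun u : ℝ => |u| * stdphi u) := by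
  have h := ((integrable_mul_exp_neg_mul_sq (by norm_num : (0:ℝ) < 1/2)).abs).div_const
    (Real.sqrt (2 * Real.pi))
  refine h.congr (Filter.Eventually.of_forall fun t => ?_)
  show |t * Real.exp (-(1/2:ℝ) * t ^ 2)| / Real.sqrt (2 * Real.pi) = |t| * stdphi t
  rw [abs_mul, abs_of_pos (Real.exp_pos _), stdphi_eq, mul_div_assoc]

noncomputable def g (x y ρ : ℝ) : ℝ :=
  2 * ∫ u, Real.sign (x - u) * stdphi u *
      (stdPhi ((y - ρ * u) / Real.sqrt (1 - ρ ^ 2)) - stdPhi y)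

lemma pointwise_bound {ρ : ℝ} (h1 : -1 < ρ) (h2 : ρ < 1) (y u : ℝ) :
    |stdPhi ((y - ρ * u) / Real.sqrt (1 - ρ ^ 2)) - stdPhi y|
      ≤ |ρ| / 2 + |ρ| * |u| / Real.sqrt (2 * Real.pi) := by
  have hr : (1 : ℝ) - |ρ| ^ 2 = 1 - ρ ^ 2 := by rw [sq_abs]
  have hA := lemA (abs_nonneg ρ) (abs_lt.2 ⟨h1, h2⟩) (y - ρ * u)
  rw [hr] at hA
  have hB := stdPhi_lip (y - ρ * u) y
  calc |stdPhi ((y - ρ * u) / Real.sqrt (1 - ρ ^ 2)) - stdPhi y|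
      ≤ |stdPhi ((y - ρ * u) / Real.sqrt (1 - ρ ^ 2)) - stdPhi (y - ρ * u)|
        + |stdPhi (y - ρ * u) - stdPhi y| := abs_sub_le _ _ _
    _ ≤ |ρ| / 2 + |y - ρ * u - y| / Real.sqrt (2 * Real.pi) := add_le_add hA hB
    _ = |ρ| / 2 + |ρ| * |u| / Real.sqrt (2 * Real.pi) := by
        rw [show y - ρ * u - y = -(ρ * u) by ring, abs_neg, abs_mul]

theorem stmt13 (ρ : ℝ) (h1 : -1 < ρ) (h2 : ρ < 1) (x y : ℝ) :
    |g x y ρ| ≤ (2 / Real.pi + 1) * |ρ| := by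
  set f := fun u : ℝ => Real.sign (x - u) * stdphi u *
      (stdPhi ((y - ρ * u) / Real.sqrt (1 - ρ ^ 2)) - stdPhi y) with hfdef
  set B := fun u : ℝ => |ρ| / 2 * stdphi u
      + |ρ| / Real.sqrt (2 * Real.pi) * (|u| * stdphi u) with hBdef
  have hmeas : AEStronglyMeasurable f volume := by
    have m1 : Measurable fun u : ℝ => Real.sign (x - u) :=
      measurable_realSign.comp (measurable_const.sub measurable_id)
    have m2 : Continuous fun u : ℝ =>
        stdPhi ((y - ρ * u) / Real.sqrt (1 - ρ ^ 2)) - stdPhi y := by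
      refine Continuous.sub ?_ continuous_const
      exact continuous_stdPhi.comp (by fun_prop)
    exact ((m1.mul continuous_stdphi.measurable).mul m2.measurable).aestronglyMeasurable
  have hbound : ∀ u, ‖f u‖ ≤ B u := by
    intro u
    rw [hfdef, Real.norm_eq_abs, abs_mul, abs_mul]
    have hstep : |Real.sign (x - u)| * |stdphi u| ≤ 1 * stdphi u := by
      rw [abs_of_pos (stdphi_pos u)]
      exact mul_le_mul_of_nonneg_right (abs_realSign _) (stdphi_pos u).le
    calc |Real.sign (x - u)| * |stdphi u|
          * |stdPhi ((y - ρ * u) / Real.sqrt (1 - ρ ^ 2)) - stdPhi y|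
        ≤ 1 * stdphi u * (|ρ| / 2 + |ρ| * |u| / Real.sqrt (2 * Real.pi)) := by
          refine mul_le_mul hstep (pointwise_bound h1 h2 y u) (abs_nonneg _) ?_
          rw [one_mul]; exact (stdphi_pos u).le
      _ = B u := by rw [hBdef]; ring
  have hBint : Integrable B := by
    refine Integrable.add ?_ ?_
    · exact integrable_stdphi.const_mul _
    · exact integrable_abs_stdphi.const_mul _
  have hfint : Integrable f := hBint.mono' hmeas (Filter.Eventually.of_forall hbound)
  have h2pi : Real.sqrt (2 * Real.pi) * Real.sqrt (2 * Real.pi) = 2 * Real.pi :=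
    Real.mul_self_sqrt (by positivity)
  have hpi : 0 < Real.pi := Real.pi_pos
  calc |g x y ρ| = 2 * |∫ u, f u| := by
        rw [g, abs_mul]
        norm_num
        rfl
    _ ≤ 2 * ∫ u, ‖f u‖ := by
        have := norm_integral_le_integral_norm f (μ := volume)
        rw [Real.norm_eq_abs] at this
        linarith
    _ ≤ 2 * ∫ u, B u := by
        have := integral_mono hfint.norm hBint hbound
        linarith
    _ = 2 * (|ρ| / 2 * 1 + |ρ| / Real.sqrt (2 * Real.pi) * (2 / Real.sqrt (2 * Real.pi))) := by
        rw [hBdef, integral_add (integrable_stdphi.const_mul _) (integrable_abs_stdphi.const_mul _),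
          integral_const_mul, integral_const_mul, integral_stdphi, integral_abs_stdphi]
    _ = (2 / Real.pi + 1) * |ρ| := by
        rw [div_mul_div_comm, h2pi]
        field_simp
        ring
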